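/- Proposition 1 (high-probability part, simple-regret decomposition for BayMOTH): Under Assumptions 1–5, for any sequence δ_1, ..., δ_T with δ_t ∈ (0,1), with probability at least 1 − Σ_{t=1}^T |X_t| δ_t − Σ_{t=1}^T p_t, the simple regret of BayMOTH satisfies r_T^BM ≤ r_T† + max_{1 ≤ t ≤ T} g_t† L_t (η_t + σ_t/√(M δ_t)). Precisely: on the intersection of the event that g_t = g_t† for all t (whose complement has probability at most Σ p_t by Assumption 2) and the event that for every round t with g_t† = 1 the Monte Carlo error satisfies |Ĵ_{t,M}(x) − J_t^{meta,*}(x)| ≤ σ_t/√(M δ_t) for all x ∈ X_t (whose complement has probability at most Σ |X_t| δ_t by Chebyshev's inequality and the union bound, using Var(Ĵ_{t,M}(x)) = σ_t(x)²/M from Assumption 4), the per-round acquisition discrepancy sup_{x ∈ X_t} |Â_t^BM(x) − A_t†(x)| ≤ g_t† (η_t + σ_t/√(M δ_t)) (using Assumption 3 when g_t† = 1, and equality of the fallback branches when g_t† = 0), which by the stability Assumption 5 gives f(x_t†) − f(x_t^BM) ≤ g_t† L_t (η_t + σ_t/√(M δ_t)) for every t, and hence r_T^BM ≤ r_T† +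 max_{1 ≤ t ≤ T} g_t† L_t (η_t + σ_t/√(M δ_t)). -/

import Mathlib

open MeasureTheory ProbabilityTheory

/-- Proposition 1 (high-probability part, simple-regret decomposition for BayMOTH).
Under Assumptions 1–5, for any `δ_t ∈ (0,1)`, with probability at least
`1 − ∑_t |X_t| δ_t − ∑_t p_t`, the simple regret of BayMOTH satisfies
`r_T^BM ≤ r_T† + max_t g_t† L_t (η_t + σ_t/√(M δ_t))`. -/
theorem baymoth_regret_high_probability
    {Ω : Type*} [MeasurableSpace Ω] (μ : Measure Ω) [IsProbabilityMeasure μ]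
    {D : Type*}
    -- objective and its upper bound
    (f : D → ℝ) (fstar : ℝ) (hstar : ∀ d, f d ≤ fstar)
    -- Assumption 1 (bounded objective)
    (B : ℝ) (hB : 0 < B) (hA1 : ∀ d, 0 ≤ f d ∧ f d ≤ B)
    -- rounds and candidate sets
    (T : ℕ) (hT : 0 < T)
    (X : Fin T → Finset D) (hX : ∀ t, (X t).Nonempty)
    -- Monte Carlo sample count
    (M : ℕ) (hM : 0 < M)
    -- gates: BayMOTH's (random) gate and the deterministic oracle gate
    (g : Fin T → Ω → Bool) (gdag : Fin T → Bool)
    -- per-round constants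
    (p δ η L σt : Fin T → ℝ) (σx : Fin T → D → ℝ)
    (hp : ∀ t, 0 ≤ p t)
    (hδ : ∀ t, δ t ∈ Set.Ioo (0 : ℝ) 1)
    (hη : ∀ t, 0 ≤ η t)
    (hL : ∀ t, 0 < L t)
    (hσx : ∀ t x, 0 ≤ σx t x)
    (hσt : ∀ t, σt t = (X t).sup' (hX t) (σx t))
    -- acquisitions (random functions of the history, hence of ω)
    (ABM A2OPT AmetaStar AmetaDag Adag : Fin T → Ω → D → ℝ)
    -- oracle-gated comparator acquisition
    (hAdag : ∀ t ω, Adag t ω = if gdag t then AmetaDag t ω else A2OPT t ω)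
    -- BayMOTH acquisition: fallback branch when the gate is off
    (hfallback : ∀ t ω, g t ω = false → ABM t ω = A2OPT t ω)
    -- Monte Carlo estimator of the meta branch
    (Jhat : Fin T → D → Ω → ℝ) (Jstar : Fin T → D → ℝ)
    -- BayMOTH acquisition minus exact meta acquisition equals MC error on meta rounds
    (hmetaMC : ∀ t ω, g t ω = true →
      ∀ x ∈ X t, ABM t ω x - AmetaStar t ω x = Jhat t x ω - Jstar t x)
    -- Assumption 2 (meta-vs-fallback branch disagreement probability)
    (hA2 : ∀ t, μ {ω | g t ω ≠ gdag t} ≤ ENNReal.ofReal (p t))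
    -- Assumption 3 (within-meta-branch virtual-environment selection error)
    (hA3 : ∀ t ω, g t ω = true → gdag t = true →
      ∀ x ∈ X t, |AmetaStar t ω x - AmetaDag t ω x| ≤ η t)
    -- Assumption 4 (Monte Carlo approximation error: unbiased with variance σx²/M)
    (hL2 : ∀ t x, MemLp (Jhat t x) 2 μ)
    (hmean : ∀ t x, (∫ ω, Jhat t x ω ∂μ) = Jstar t x)
    (hvar : ∀ t x, variance (Jhat t x) μ = (σx t x) ^ 2 / M)
    -- Assumption 5 (acquisition-to-value stability)
    (hA5 : ∀ t, ∀ (A Atil : D → ℝ) (xA xAtil : D),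
      xA ∈ X t → xAtil ∈ X t →
      (∀ x ∈ X t, A x ≤ A xA) → (∀ x ∈ X t, Atil x ≤ Atil xAtil) →
      ∀ ε : ℝ, (∀ x ∈ X t, |A x - Atil x| ≤ ε) →
        f xAtil - f xA ≤ L t * ε)
    -- selected points: BayMOTH maximizes its acquisition, the comparator maximizes A†
    (xBM xdag : Fin T → Ω → D)
    (hmemBM : ∀ t ω, xBM t ω ∈ X t)
    (hargBM : ∀ t ω, ∀ x ∈ X t, ABM t ω x ≤ ABM t ω (xBM t ω))
    (hmemdag : ∀ t ω, xdag t ω ∈ X t)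
    (hargdag : ∀ t ω, ∀ x ∈ X t, Adag t ω x ≤ Adag t ω (xdag t ω)) :
    -- conclusion: with probability at least 1 − ∑ |X_t| δ_t − ∑ p_t,
    -- r_T^BM ≤ r_T† + max_t g_t† L_t (η_t + σ_t / √(M δ_t))
    ENNReal.ofReal (1 - ((∑ t, ((X t).card : ℝ) * δ t) + ∑ t, p t))
      ≤ μ {ω |
        fstar - Finset.univ.sup' (Finset.univ_nonempty_iff.mpr ⟨⟨0, hT⟩⟩)
            (fun t => f (xBM t ω))
          ≤ (fstar - Finset.univ.sup' (Finset.univ_nonempty_iff.mpr ⟨⟨0, hT⟩⟩)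
            (fun t => f (xdag t ω)))
            + Finset.univ.sup' (Finset.univ_nonempty_iff.mpr ⟨⟨0, hT⟩⟩)
            (fun t => if gdag t then
              L t * (η t + σt t / Real.sqrt (M * δ t)) else 0)} := by

  classical
  set c : Fin T → ℝ := fun t => σt t / Real.sqrt ((M : ℝ) * δ t) with hc
  have hσtnn : ∀ t, 0 ≤ σt t := by
    intro t
    rw [hσt t]
    obtain ⟨x, hx⟩ := hX t
    exact le_trans (hσx t x) (Finset.le_sup' _ hx)
  have hcnn : ∀ t, 0 ≤ c t := fun t => div_nonneg (hσtnn t) (Real.sqrt_nonneg _)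
  have hηc : ∀ t, 0 ≤ η t + c t := fun t => add_nonneg (hη t) (hcnn t)
  set E : Set Ω := {ω | (∀ t, g t ω = gdag t) ∧
    ∀ t, ∀ x ∈ X t, |Jhat t x ω - Jstar t x| ≤ c t} with hE
  -- Step 1: on the good event the regret bound holds
  have hES : E ⊆ {ω |
        fstar - Finset.univ.sup' (Finset.univ_nonempty_iff.mpr ⟨⟨0, hT⟩⟩)
            (fun t => f (xBM t ω))
          ≤ (fstar - Finset.univ.sup' (Finset.univ_nonempty_iff.mpr ⟨⟨0, hT⟩⟩)
            (fun t => f (xdag t ω)))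
            + Finset.univ.sup' (Finset.univ_nonempty_iff.mpr ⟨⟨0, hT⟩⟩)
            (fun t => if gdag t then
              L t * (η t + σt t / Real.sqrt (M * δ t)) else 0)} := by
    rintro ω ⟨hg, hJ⟩
    simp only [Set.mem_setOf_eq]
    have hround : ∀ t : Fin T, f (xdag t ω) ≤ f (xBM t ω) +
        (if gdag t then L t * (η t + σt t / Real.sqrt (M * δ t)) else 0) := by
      intro t
      by_cases hgt : gdag t = true
      · have hgω : g t ω = true := by rw [hg t, hgt]
        have hdiff : ∀ x ∈ X t, |ABM t ω x - Adag t ω x| ≤ η t + c t := by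
          intro x hx
          rw [hAdag t ω, hgt, if_pos rfl]
          have h1 := hmetaMC t ω hgω x hx
          have h2 := hA3 t ω hgω hgt x hx
          have h3 := hJ t x hx
          calc |ABM t ω x - AmetaDag t ω x|
              = |(ABM t ω x - AmetaStar t ω x) + (AmetaStar t ω x - AmetaDag t ω x)| := by
                ring_nf
            _ ≤ |ABM t ω x - AmetaStar t ω x| + |AmetaStar t ω x - AmetaDag t ω x| :=
                abs_add_le _ _
            _ ≤ c t + η t := by rw [h1]; exact add_le_add h3 h2
            _ = η t + c t := add_comm _ _
        have := hA5 t (ABM t ω) (Adag t ω) (xBM t ω) (xdag t ω)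
          (hmemBM t ω) (hmemdag t ω) (hargBM t ω) (hargdag t ω) (η t + c t) hdiff
        rw [if_pos hgt]
        simp only [hc] at this
        linarith
      · have hgω : g t ω = false := by
          rw [hg t]; exact Bool.not_eq_true _ ▸ (by simpa using hgt)
        have hfb := hfallback t ω hgω
        have hda : Adag t ω = A2OPT t ω := by rw [hAdag t ω, if_neg hgt]
        have hdiff : ∀ x ∈ X t, |ABM t ω x - Adag t ω x| ≤ 0 := by
          intro x hx
          rw [hfb, hda, sub_self, abs_zero]
        have := hA5 t (ABM t ω) (Adag t ω) (xBM t ω) (xdag t ω)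
          (hmemBM t ω) (hmemdag t ω) (hargBM t ω) (hargdag t ω) 0 hdiff
        rw [if_neg hgt]
        linarith
    have hne := Finset.univ_nonempty_iff.mpr (⟨⟨0, hT⟩⟩ : Nonempty (Fin T))
    have h1 : Finset.univ.sup' hne (fun t => f (xdag t ω)) ≤
        Finset.univ.sup' hne (fun t => f (xBM t ω)) +
        Finset.univ.sup' hne (fun t => if gdag t then
          L t * (η t + σt t / Real.sqrt (M * δ t)) else 0) := by
      apply Finset.sup'_le
      intro t _
      refine le_trans (hround t) (add_le_add ?_ ?_)
      · exact Finset.le_sup' (fun t => f (xBM t ω)) (Finset.mem_univ t)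
      · exact Finset.le_sup'
          (fun t => if gdag t then L t * (η t + σt t / Real.sqrt (M * δ t)) else 0)
          (Finset.mem_univ t)
    linarith
  -- Step 2: probability of the bad event
  have hkey : ∀ (t : Fin T), ∀ x ∈ X t,
      μ {ω | c t < |Jhat t x ω - Jstar t x|} ≤ ENNReal.ofReal (δ t) := by
    intro t x hx
    have hδt := hδ t
    have hσle : σx t x ≤ σt t := by rw [hσt t]; exact Finset.le_sup' _ hx
    rcases eq_or_lt_of_le (hσtnn t) with hσ0 | hσpos
    · -- degenerate case: zero variance
      have hσx0 : σx t x = 0 := le_antisymm (hσ0 ▸ hσle) (hσx t x)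
      have hvar0 : variance (Jhat t x) μ = 0 := by rw [hvar t x, hσx0]; simp
      have hev : evariance (Jhat t x) μ = 0 := by
        have := (hL2 t x).ofReal_variance_eq
        rw [hvar0] at this
        simpa using this.symm
      have hae : Jhat t x =ᵐ[μ] fun _ => Jstar t x := by
        have h := (evariance_eq_zero_iff ((hL2 t x).1.aemeasurable)).1 hev
        filter_upwards [h] with ω hω
        rw [hω, hmean t x]
      have hnull : μ {ω | ¬ Jhat t x ω = Jstar t x} = 0 := MeasureTheory.ae_iff.1 hae
      have hsub : {ω | c t < |Jhat t x ω - Jstar t x|} ⊆ {ω | ¬ Jhat t x ω = Jstar t x} := by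
        intro ω hω
        simp only [Set.mem_setOf_eq] at *
        intro heq
        rw [heq, sub_self, abs_zero] at hω
        exact absurd hω (not_lt.2 (hcnn t))
      calc μ {ω | c t < |Jhat t x ω - Jstar t x|} ≤ μ {ω | ¬ Jhat t x ω = Jstar t x} :=
            measure_mono hsub
        _ = 0 := hnull
        _ ≤ ENNReal.ofReal (δ t) := zero_le
    · -- Chebyshev case
      have hMδ : (0 : ℝ) < (M : ℝ) * δ t := by
        have : (0:ℝ) < (M:ℝ) := Nat.cast_pos.2 hM
        exact mul_pos this hδt.1
      have hsqrt : 0 < Real.sqrt ((M : ℝ) * δ t) := Real.sqrt_pos.2 hMδ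
      have hcpos : 0 < c t := div_pos hσpos hsqrt
      have hcheb := meas_ge_le_variance_div_sq (μ := μ) (hL2 t x) hcpos
      rw [hmean t x] at hcheb
      have hsub : {ω | c t < |Jhat t x ω - Jstar t x|} ⊆
          {ω | c t ≤ |Jhat t x ω - Jstar t x|} := Set.setOf_subset_setOf.2 fun ω => le_of_lt
      have hc2 : (c t) ^ 2 = (σt t) ^ 2 / ((M : ℝ) * δ t) := by
        rw [hc]
        simp only [div_pow, Real.sq_sqrt hMδ.le]
      have hvc : variance (Jhat t x) μ / (c t) ^ 2 = δ t * ((σx t x) ^ 2 / (σt t) ^ 2) := by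
        rw [hvar t x, hc2]
        have hM0 : (M : ℝ) ≠ 0 := Nat.cast_ne_zero.2 hM.ne'
        have hσ0 : σt t ≠ 0 := hσpos.ne'
        field_simp
      have hfrac : δ t * ((σx t x) ^ 2 / (σt t) ^ 2) ≤ δ t := by
        have h1 : (σx t x) ^ 2 ≤ (σt t) ^ 2 := pow_le_pow_left₀ (hσx t x) hσle 2
        have h2 : (σx t x) ^ 2 / (σt t) ^ 2 ≤ 1 :=
          div_le_one_of_le₀ h1 (sq_nonneg _)
        nlinarith [hδt.1.le]
      calc μ {ω | c t < |Jhat t x ω - Jstar t x|}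
          ≤ μ {ω | c t ≤ |Jhat t x ω - Jstar t x|} := measure_mono hsub
        _ ≤ ENNReal.ofReal (variance (Jhat t x) μ / (c t) ^ 2) := hcheb
        _ ≤ ENNReal.ofReal (δ t) := by
            rw [hvc]; exact ENNReal.ofReal_le_ofReal hfrac
  have hcompl : μ Eᶜ ≤
      ENNReal.ofReal ((∑ t, ((X t).card : ℝ) * δ t) + ∑ t, p t) := by
    have hsub : Eᶜ ⊆ (⋃ t, {ω | g t ω ≠ gdag t}) ∪
        (⋃ t, ⋃ x ∈ X t, {ω | c t < |Jhat t x ω - Jstar t x|}) := by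
      intro ω hω
      by_contra hnot
      apply hω
      simp only [Set.mem_union, Set.mem_iUnion, not_or, not_exists,
        Set.mem_setOf_eq, not_lt, not_not] at hnot
      exact ⟨fun t => hnot.1 t, fun t x hx => hnot.2 t x hx⟩
    have hb1 : μ (⋃ t, {ω | g t ω ≠ gdag t}) ≤ ENNReal.ofReal (∑ t, p t) := by
      calc μ (⋃ t, {ω | g t ω ≠ gdag t}) ≤ ∑ t, μ {ω | g t ω ≠ gdag t} :=
            measure_iUnion_fintype_le μ _
        _ ≤ ∑ t, ENNReal.ofReal (p t) := Finset.sum_le_sum fun t _ => hA2 t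
        _ = ENNReal.ofReal (∑ t, p t) :=
            (ENNReal.ofReal_sum_of_nonneg (fun t _ => hp t)).symm
    have hb2 : μ (⋃ t, ⋃ x ∈ X t, {ω | c t < |Jhat t x ω - Jstar t x|}) ≤
        ENNReal.ofReal (∑ t, ((X t).card : ℝ) * δ t) := by
      calc μ (⋃ t, ⋃ x ∈ X t, {ω | c t < |Jhat t x ω - Jstar t x|})
          ≤ ∑ t, μ (⋃ x ∈ X t, {ω | c t < |Jhat t x ω - Jstar t x|}) :=
            measure_iUnion_fintype_le μ _
        _ ≤ ∑ t, ∑ x ∈ X t, μ {ω | c t < |Jhat t x ω - Jstar t x|} :=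
            Finset.sum_le_sum fun t _ => measure_biUnion_finset_le (X t) _
        _ ≤ ∑ t, ∑ x ∈ X t, ENNReal.ofReal (δ t) :=
            Finset.sum_le_sum fun t _ => Finset.sum_le_sum fun x hx => hkey t x hx
        _ = ∑ t, ENNReal.ofReal (((X t).card : ℝ) * δ t) := by
            refine Finset.sum_congr rfl fun t _ => ?_
            rw [Finset.sum_const, nsmul_eq_mul,
              ENNReal.ofReal_mul (by positivity)]
            simp
        _ = ENNReal.ofReal (∑ t, ((X t).card : ℝ) * δ t) :=
            (ENNReal.ofReal_sum_of_nonneg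
              (fun t _ => mul_nonneg (by positivity) (hδ t).1.le)).symm
    calc μ Eᶜ ≤ μ ((⋃ t, {ω | g t ω ≠ gdag t}) ∪
            (⋃ t, ⋃ x ∈ X t, {ω | c t < |Jhat t x ω - Jstar t x|})) := measure_mono hsub
      _ ≤ μ (⋃ t, {ω | g t ω ≠ gdag t}) +
            μ (⋃ t, ⋃ x ∈ X t, {ω | c t < |Jhat t x ω - Jstar t x|}) := measure_union_le _ _
      _ ≤ ENNReal.ofReal (∑ t, p t) + ENNReal.ofReal (∑ t, ((X t).card : ℝ) * δ t) :=
            add_le_add hb1 hb2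
      _ = ENNReal.ofReal ((∑ t, ((X t).card : ℝ) * δ t) + ∑ t, p t) := by
            rw [← ENNReal.ofReal_add (Finset.sum_nonneg fun t _ => hp t)
              (Finset.sum_nonneg fun t _ => mul_nonneg (by positivity) (hδ t).1.le)]
            rw [add_comm]
  -- Step 3: assemble
  have hsnn : 0 ≤ (∑ t, ((X t).card : ℝ) * δ t) + ∑ t, p t :=
    add_nonneg (Finset.sum_nonneg fun t _ => mul_nonneg (by positivity) (hδ t).1.le)
      (Finset.sum_nonneg fun t _ => hp t)
  have hEc : (1 : ENNReal) ≤ μ E + μ Eᶜ := by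
    have := measure_union_le (μ := μ) E Eᶜ
    rw [Set.union_compl_self, measure_univ] at this
    exact this
  calc ENNReal.ofReal (1 - ((∑ t, ((X t).card : ℝ) * δ t) + ∑ t, p t))
      = 1 - ENNReal.ofReal ((∑ t, ((X t).card : ℝ) * δ t) + ∑ t, p t) := by
        rw [ENNReal.ofReal_sub _ hsnn, ENNReal.ofReal_one]
    _ ≤ 1 - μ Eᶜ := tsub_le_tsub_left hcompl 1
    _ ≤ μ E := tsub_le_iff_right.2 hEc
    _ ≤ _ := measure_mono hES
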